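/- Let C ≥ 1 and γ be integers with γ + 1 ≥ C, and let λ be a real number with 0 ≤ λ ≤ C. With b_i(λ) := λ^i / ∏_{k=1}^{i} min(k, C), one has b_{γ+1}(λ) / ∑_{i=0}^{γ+1} b_i(λ) ≤ (C^C/C!) / (∑_{l=0}^{C} C^l/l! + (γ+1−C)·C^C/C!). -/

import Mathlib

open Finset

/-- The unnormalized stationary weights of an M/M/C/N queue with arrival rate
`λ` and unit service rates. -/
noncomputable def mmcWeight (C : ℕ) (lam : ℝ) (i : ℕ) : ℝ :=
  lam ^ i / ∏ k ∈ Finset.Icc 1 i, (min k C : ℝ)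

lemma prodP_pos (C : ℕ) (hC : 1 ≤ C) (i : ℕ) :
    0 < ∏ k ∈ Finset.Icc 1 i, (min k C : ℝ) := by
  apply Finset.prod_pos
  intro k hk
  simp only [Finset.mem_Icc] at hk
  have : 1 ≤ min k C := le_min hk.1 hC
  exact_mod_cast Nat.lt_of_lt_of_le Nat.zero_lt_one this

lemma prodP_le (C : ℕ) (i : ℕ) (hi : i ≤ C) :
    ∏ k ∈ Finset.Icc 1 i, (min k C : ℝ) = (Nat.factorial i : ℝ) := by
  induction i with
  | zero => simp
  | succ n ih =>
    rw [Finset.prod_Icc_succ_top (by omega : 1 ≤ n + 1), ih (by omega)]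
    have : min ((n:ℝ) + 1) (C:ℝ) = (n:ℝ) + 1 := min_eq_left (by exact_mod_cast hi)
    push_cast
    rw [this, Nat.factorial_succ]
    push_cast
    ring

lemma prodP_ge (C : ℕ) (i : ℕ) (hi : C ≤ i) :
    ∏ k ∈ Finset.Icc 1 i, (min k C : ℝ)
      = (Nat.factorial C : ℝ) * (C : ℝ) ^ (i - C) := by
  induction i, hi using Nat.le_induction with
  | base => rw [prodP_le C C le_rfl]; simp
  | succ n hn ih =>
    rw [Finset.prod_Icc_succ_top (by omega : 1 ≤ n + 1), ih]
    have h1 : min ((n:ℝ) + 1) (C:ℝ) = (C:ℝ) := min_eq_right (by exact_mod_cast Nat.le_succ_of_le hn)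
    have h2 : n + 1 - C = (n - C) + 1 := by omega
    push_cast
    rw [h1, h2, pow_succ]
    ring

lemma mmcWeight_at_C (C : ℕ) (hC : 1 ≤ C) (i : ℕ) (hi : C ≤ i) :
    mmcWeight C (C : ℝ) i = (C : ℝ) ^ C / (Nat.factorial C : ℝ) := by
  unfold mmcWeight
  rw [prodP_ge C i hi]
  have hCpos : (0 : ℝ) < (C : ℝ) := by exact_mod_cast Nat.lt_of_lt_of_le Nat.zero_lt_one hC
  have hCne : (C : ℝ) ≠ 0 := ne_of_gt hCpos
  have hfne : (Nat.factorial C : ℝ) ≠ 0 := by exact_mod_cast (Nat.factorial_pos C).ne'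
  have hpow : (C : ℝ) ^ i = (C : ℝ) ^ C * (C : ℝ) ^ (i - C) := by
    rw [← pow_add]; congr 1; omega
  rw [hpow]
  field_simp

lemma mmcWeight_at_C_le (C : ℕ) (hC : 1 ≤ C) (i : ℕ) (hi : i ≤ C) :
    mmcWeight C (C : ℝ) i = (C : ℝ) ^ i / (Nat.factorial i : ℝ) := by
  unfold mmcWeight
  rw [prodP_le C i hi]

/-- The blocking probability of an M/M/C/γ+1 queue with arrival rate `λ ≤ C`
is at most its value at `λ = C`, given in closed form. -/
theorem blocking_prob_bound (C γ : ℕ) (hC : 1 ≤ C) (hγ : C ≤ γ + 1)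
    (lam : ℝ) (h0 : 0 ≤ lam) (h1 : lam ≤ C) :
    mmcWeight C lam (γ + 1) / ∑ i ∈ Finset.range (γ + 2), mmcWeight C lam i ≤
      ((C : ℝ) ^ C / (Nat.factorial C : ℝ)) /
        ((∑ l ∈ Finset.range (C + 1), (C : ℝ) ^ l / (Nat.factorial l : ℝ)) +
          ((γ : ℝ) + 1 - C) * ((C : ℝ) ^ C / (Nat.factorial C : ℝ))) := by
  have hCpos : (0 : ℝ) < (C : ℝ) := by exact_mod_cast Nat.lt_of_lt_of_le Nat.zero_lt_one hC
  -- rewrite the RHS as blocking probability at λ = C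
  have hnum : (C : ℝ) ^ C / (Nat.factorial C : ℝ) = mmcWeight C (C : ℝ) (γ + 1) :=
    (mmcWeight_at_C C hC (γ + 1) hγ).symm
  have hsum : (∑ l ∈ Finset.range (C + 1), (C : ℝ) ^ l / (Nat.factorial l : ℝ)) +
      ((γ : ℝ) + 1 - C) * ((C : ℝ) ^ C / (Nat.factorial C : ℝ))
      = ∑ i ∈ Finset.range (γ + 2), mmcWeight C (C : ℝ) i := by
    have hsplit : ∑ i ∈ Finset.Ico 0 (C + 1), mmcWeight C (C : ℝ) i +
        ∑ i ∈ Finset.Ico (C + 1) (γ + 2), mmcWeight C (C : ℝ) i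
        = ∑ i ∈ Finset.Ico 0 (γ + 2), mmcWeight C (C : ℝ) i :=
      Finset.sum_Ico_consecutive _ (by omega) (by omega)
    rw [Finset.range_eq_Ico, Finset.range_eq_Ico, ← hsplit]
    congr 1
    · rw [← Finset.range_eq_Ico]
      apply Finset.sum_congr rfl
      intro i hi
      rw [mmcWeight_at_C_le C hC i (by simp only [Finset.mem_range] at hi; omega)]
    · rw [Finset.sum_congr rfl (fun i hi => mmcWeight_at_C C hC i
        (by simp only [Finset.mem_Ico] at hi; omega)), Finset.sum_const, Nat.card_Ico,
        nsmul_eq_mul]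
      congr 1
      have : γ + 2 - (C + 1) = γ + 1 - C := by omega
      rw [this, Nat.cast_sub hγ]
      push_cast
      ring
  rw [hsum, hnum]
  -- positivity of both denominators
  have hweight_nonneg : ∀ (l : ℝ), 0 ≤ l → ∀ i, 0 ≤ mmcWeight C l i := by
    intro l hl i
    exact div_nonneg (pow_nonneg hl i) (prodP_pos C hC i).le
  have hden : ∀ (l : ℝ), 0 ≤ l → 0 < ∑ i ∈ Finset.range (γ + 2), mmcWeight C l i := by
    intro l hl
    apply Finset.sum_pos' (fun i _ => hweight_nonneg l hl i)
    refine ⟨0, Finset.mem_range.mpr (by omega), ?_⟩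
    unfold mmcWeight
    simp
  rw [div_le_div_iff₀ (hden lam h0) (hden (C : ℝ) hCpos.le)]
  rw [Finset.mul_sum, Finset.mul_sum]
  apply Finset.sum_le_sum
  intro i hi
  have hiN : i ≤ γ + 1 := by simp only [Finset.mem_range] at hi; omega
  unfold mmcWeight
  rw [div_mul_div_comm, div_mul_div_comm]
  apply div_le_div_of_nonneg_right ?_ (by positivity)
  -- λ^(γ+1) * C^i ≤ C^(γ+1) * λ^i
  have key : lam ^ (γ + 1 - i) ≤ (C : ℝ) ^ (γ + 1 - i) := pow_le_pow_left₀ h0 h1 _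
  have e1 : lam ^ (γ + 1) = lam ^ i * lam ^ (γ + 1 - i) := by
    rw [← pow_add]; congr 1; omega
  have e2 : (C : ℝ) ^ (γ + 1) = (C : ℝ) ^ i * (C : ℝ) ^ (γ + 1 - i) := by
    rw [← pow_add]; congr 1; omega
  rw [e1, e2]
  calc lam ^ i * lam ^ (γ + 1 - i) * (C : ℝ) ^ i
      ≤ lam ^ i * (C : ℝ) ^ (γ + 1 - i) * (C : ℝ) ^ i := by
        apply mul_le_mul_of_nonneg_right _ (by positivity)
        exact mul_le_mul_of_nonneg_left key (pow_nonneg h0 i)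
    _ = (C : ℝ) ^ i * (C : ℝ) ^ (γ + 1 - i) * lam ^ i := by ring
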